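/- Let R : ℝ³ → ℝ³ be the reflection R(x₁, x₂, x₃) = (x₁, x₂, −x₃), and let B ⊆ ℝ³ be a Lebesgue-measurable set with R(B) = B and with B ∩ {x₃ = 0} of Lebesgue measure zero. Let θ̂ : ℝ³ → ℝ³ be continuously differentiable with compact support, and set θ := θ̂ + R ∘ θ̂ ∘ R. Then ∫_B ⟨Dθ̂(x), Dθ(x)⟩_F dx = ∫_{B ∩ {x₃ > 0}} ‖Dθ̂(x) + R ∘ Dθ̂(R x) ∘ R‖_F² dx; in particular ∫_B ⟨Dθ̂(x), Dθ(x)⟩_F dx ≥ 0. -/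

import Mathlib

open scoped RealInnerProductSpace
open MeasureTheory

abbrev E3 := EuclideanSpace ℝ (Fin 3)

/-- The reflection `R(x₁, x₂, x₃) = (x₁, x₂, -x₃)` of ℝ³. -/
noncomputable def Rfun : E3 → E3 := fun x => WithLp.toLp 2 (fun i : Fin 3 => if i = 2 then -(x 2) else x i)

/-- The matrix of the reflection `R`. -/
noncomputable def Rmat : Matrix (Fin 3) (Fin 3) ℝ :=
  Matrix.diagonal fun i : Fin 3 => if i = 2 then (-1 : ℝ) else 1

/-- The Jacobian matrix of a map θ : ℝ³ → ℝ³ at x. -/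
noncomputable def Jmat (θ : E3 → E3) (x : E3) : Matrix (Fin 3) (Fin 3) ℝ :=
  fun i j => fderiv ℝ θ x (EuclideanSpace.single j 1) i

/-- Frobenius inner product of 3×3 matrices. -/
def frobInner (A B : Matrix (Fin 3) (Fin 3) ℝ) : ℝ := ∑ i, ∑ j, A i j * B i j

/-! ### Auxiliary material -/

lemma Rfun_involutive : Function.Involutive Rfun := by
  intro x; ext i
  by_cases h : i = 2
  · subst h; simp [Rfun]
  · simp [Rfun, h]

/-- The diagonal entries of `Rmat`. -/
noncomputable def dR : Fin 3 → ℝ := fun i => if i = 2 then (-1 : ℝ) else 1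

lemma dR_sq (i : Fin 3) : dR i * dR i = 1 := by
  unfold dR; split <;> norm_num

lemma Rfun_apply' (x : E3) (i : Fin 3) : Rfun x i = dR i * x i := by
  by_cases h : i = 2
  · subst h; simp [Rfun, dR]
  · simp [Rfun, dR, h]

/-- `Rfun` as a linear map. -/
noncomputable def Rlm : E3 →ₗ[ℝ] E3 where
  toFun := Rfun
  map_add' x y := by
    ext i
    by_cases h : i = 2 <;>
      simp [Rfun, h, PiLp.add_apply] <;> ring
  map_smul' c x := by
    ext i
    by_cases h : i = 2 <;>
      simp [Rfun, h, PiLp.smul_apply, smul_eq_mul] <;> ring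

/-- `Rfun` as a linear isometry equivalence. -/
noncomputable def Rli : E3 ≃ₗᵢ[ℝ] E3 where
  toLinearEquiv :=
    { Rlm with
      invFun := Rfun
      left_inv := Rfun_involutive
      right_inv := Rfun_involutive }
  norm_map' x := by
    have : ∀ y : E3, ‖y‖ = Real.sqrt (∑ i, ‖y i‖ ^ 2) := fun y => EuclideanSpace.norm_eq y
    show ‖Rfun x‖ = ‖x‖
    rw [this, this]
    congr 1
    rw [Fin.sum_univ_three, Fin.sum_univ_three]
    simp [Rfun]

lemma Rli_coe : ⇑Rli = Rfun := rfl

/-- `Rfun` as a continuous linear map. -/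
noncomputable def Rcl : E3 →L[ℝ] E3 where
  toLinearMap := Rlm
  cont := Rli.continuous

lemma Rcl_coe : ⇑Rcl = Rfun := rfl

lemma Rmat_conj_apply (M : Matrix (Fin 3) (Fin 3) ℝ) (i j : Fin 3) :
    (Rmat * M * Rmat) i j = dR i * M i j * dR j := by
  simp [Rmat, Matrix.diagonal_mul, Matrix.mul_diagonal, dR, mul_comm, mul_assoc, mul_left_comm]

lemma Rfun_single (j : Fin 3) :
    Rfun (EuclideanSpace.single j (1 : ℝ)) = dR j • EuclideanSpace.single j (1 : ℝ) := by
  ext i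
  rw [Rfun_apply' _ i]
  by_cases h : i = j <;>
    simp [EuclideanSpace.single_apply, h, dR] <;> split_ifs <;> simp [EuclideanSpace.single_apply, h]

/-- Chain rule: Jacobian of the symmetrized field. -/
lemma jmat_symm (θhat : E3 → E3) (hθhat : ContDiff ℝ 1 θhat) (x : E3) :
    Jmat (fun y => θhat y + Rfun (θhat (Rfun y))) x
      = Jmat θhat x + Rmat * Jmat θhat (Rfun x) * Rmat := by
  have hd : Differentiable ℝ θhat := hθhat.differentiable one_ne_zero
  have h1 : HasFDerivAt θhat (fderiv ℝ θhat x) x := (hd x).hasFDerivAt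
  have h2 : HasFDerivAt θhat (fderiv ℝ θhat (Rfun x)) (Rfun x) := (hd _).hasFDerivAt
  have hR : ∀ y : E3, HasFDerivAt Rfun Rcl y := fun y => Rcl.hasFDerivAt
  have h3 : HasFDerivAt (fun y => Rfun (θhat (Rfun y)))
      (Rcl.comp ((fderiv ℝ θhat (Rfun x)).comp Rcl)) x :=
    by have := (hR (θhat (Rfun x))).comp x (h2.comp x (hR x)); exact this
  have h5 : fderiv ℝ (fun y => θhat y + Rfun (θhat (Rfun y))) x
      = fderiv ℝ θhat x + Rcl.comp ((fderiv ℝ θhat (Rfun x)).comp Rcl) :=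
    (h1.add h3).fderiv
  funext i j
  show (fderiv ℝ (fun y => θhat y + Rfun (θhat (Rfun y))) x) (EuclideanSpace.single j 1) i
      = _
  rw [h5]
  have hRv : Rcl (EuclideanSpace.single j (1 : ℝ)) = dR j • EuclideanSpace.single j (1 : ℝ) := by
    rw [show Rcl (EuclideanSpace.single j (1:ℝ)) = Rfun (EuclideanSpace.single j 1) from rfl,
      Rfun_single]
  simp only [ContinuousLinearMap.add_apply, ContinuousLinearMap.comp_apply, hRv,
    ContinuousLinearMap.map_smul]
  simp only [PiLp.add_apply, PiLp.smul_apply, smul_eq_mul, Matrix.add_apply, Rmat_conj_apply]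
  rw [show (Rcl ((fderiv ℝ θhat (Rfun x)) (EuclideanSpace.single j 1))) i
      = dR i * ((fderiv ℝ θhat (Rfun x)) (EuclideanSpace.single j 1)) i from Rfun_apply' _ i]
  show Jmat θhat x i j + dR j * (dR i * Jmat θhat (Rfun x) i j)
      = Jmat θhat x i j + dR i * Jmat θhat (Rfun x) i j * dR j
  ring

lemma frob_nonneg (M : Matrix (Fin 3) (Fin 3) ℝ) : 0 ≤ frobInner M M := by
  unfold frobInner
  refine Finset.sum_nonneg fun i _ => Finset.sum_nonneg fun j _ => mul_self_nonneg _

lemma frob_key (A B : Matrix (Fin 3) (Fin 3) ℝ) :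
    frobInner A (A + Rmat * B * Rmat) + frobInner B (B + Rmat * A * Rmat)
      = frobInner (A + Rmat * B * Rmat) (A + Rmat * B * Rmat) := by
  have d0 : dR 0 = 1 := rfl
  have d1 : dR 1 = 1 := rfl
  have d2 : dR 2 = -1 := by norm_num [dR]
  simp only [frobInner, Matrix.add_apply, Rmat_conj_apply, Fin.sum_univ_three, d0, d1, d2]
  ring

/-- For a set B symmetric under the reflection R (with negligible intersection with
the reflection plane) and a compactly supported C¹ field θ̂, the Frobenius pairing of
Dθ̂ with the Jacobian of the symmetrized field θ = θ̂ + R ∘ θ̂ ∘ R over B equals the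
integral over the upper half of B of the squared Frobenius norm of
Dθ̂(x) + R ∘ Dθ̂(Rx) ∘ R; in particular, it is nonnegative. -/
theorem symmetrized_descent_direction
    (B : Set E3) (hB : MeasurableSet B) (hRB : Rfun '' B = B)
    (hB0 : volume (B ∩ {x : E3 | x 2 = 0}) = 0)
    (θhat : E3 → E3) (hθhat : ContDiff ℝ 1 θhat) (hsupp : HasCompactSupport θhat)
    (θ : E3 → E3) (hθ : θ = fun x => θhat x + Rfun (θhat (Rfun x))) :
    (∫ x in B, frobInner (Jmat θhat x) (Jmat θ x)) =
      (∫ x in B ∩ {x : E3 | 0 < x 2},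
        frobInner (Jmat θhat x + Rmat * Jmat θhat (Rfun x) * Rmat)
          (Jmat θhat x + Rmat * Jmat θhat (Rfun x) * Rmat)) ∧
    0 ≤ ∫ x in B, frobInner (Jmat θhat x) (Jmat θ x) := by
  have hJ : ∀ x, Jmat θ x = Jmat θhat x + Rmat * Jmat θhat (Rfun x) * Rmat := by
    intro x; rw [hθ]; exact jmat_symm θhat hθhat x
  set A : E3 → Matrix (Fin 3) (Fin 3) ℝ := Jmat θhat with hA
  set S : E3 → Matrix (Fin 3) (Fin 3) ℝ :=
    fun x => A x + Rmat * A (Rfun x) * Rmat with hS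
  set f : E3 → ℝ := fun x => frobInner (A x) (S x) with hf
  -- the integrand is f
  have hfeq : (fun x => frobInner (Jmat θhat x) (Jmat θ x)) = f := by
    funext x; rw [hf, hJ x]
  -- continuity
  have hRcont : Continuous Rfun := Rli.continuous
  have hAij : ∀ i j, Continuous fun x => A x i j := by
    intro i j
    have h1 : Continuous (fderiv ℝ θhat) := hθhat.continuous_fderiv one_ne_zero
    have h2 : Continuous fun x => (fderiv ℝ θhat x) (EuclideanSpace.single j 1) :=
      ((ContinuousLinearMap.apply ℝ E3 (EuclideanSpace.single j (1:ℝ))).continuous).comp h1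
    exact ((EuclideanSpace.proj i).continuous).comp h2
  have hSij : ∀ i j, Continuous fun x => S x i j := by
    intro i j
    have : (fun x => S x i j) = fun x => A x i j + dR i * A (Rfun x) i j * dR j := by
      funext x; rw [hS]; simp [Matrix.add_apply, Rmat_conj_apply]
    rw [this]
    exact (hAij i j).add (((continuous_const.mul ((hAij i j).comp hRcont)).mul continuous_const))
  have hfcont : Continuous f := by
    rw [hf]
    unfold frobInner
    exact continuous_finset_sum _ fun i _ =>
      continuous_finset_sum _ fun j _ => (hAij i j).mul (hSij i j)
  -- compact support
  have hfK : HasCompactSupport f := by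
    refine (hsupp.fderiv (𝕜 := ℝ)).mono ?_
    intro x hx
    simp only [Function.mem_support] at hx ⊢
    intro h0
    apply hx
    rw [hf]
    unfold frobInner
    have hA0 : ∀ i j, A x i j = 0 := by
      intro i j
      show (fderiv ℝ θhat x) (EuclideanSpace.single j 1) i = 0
      rw [h0]; rfl
    refine Finset.sum_eq_zero fun i _ => Finset.sum_eq_zero fun j _ => ?_
    rw [hA0]; ring
  have hfint : Integrable f := hfcont.integrable_of_hasCompactSupport hfK
  have hfRcont : Continuous (f ∘ Rfun) := hfcont.comp hRcont
  have hfRK : HasCompactSupport (f ∘ Rfun) := hfK.comp_homeomorph Rli.toHomeomorph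
  have hfRint : Integrable (f ∘ Rfun) := hfRcont.integrable_of_hasCompactSupport hfRK
  -- sets
  have hx2cont : Continuous fun x : E3 => x 2 := (EuclideanSpace.proj (2 : Fin 3)).continuous
  set Bp : Set E3 := B ∩ {x : E3 | 0 < x 2} with hBpdef
  set Bm : Set E3 := B ∩ {x : E3 | x 2 < 0} with hBmdef
  have hBp : MeasurableSet Bp := hB.inter (isOpen_lt continuous_const hx2cont).measurableSet
  have hBm : MeasurableSet Bm := hB.inter (isOpen_lt hx2cont continuous_const).measurableSet
  have hdisj : Disjoint Bp Bm := by
    rw [Set.disjoint_left]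
    rintro x ⟨-, hx1⟩ ⟨-, hx2⟩
    simp only [Set.mem_setOf_eq] at hx1 hx2
    exact lt_asymm hx1 hx2
  have hae : B =ᵐ[volume] ((Bp ∪ Bm : Set E3)) := by
    rw [MeasureTheory.ae_eq_set]
    refine ⟨measure_mono_null ?_ hB0, ?_⟩
    · rintro x ⟨hxB, hx⟩
      refine ⟨hxB, ?_⟩
      have h1 : ¬ (0 < x 2) := fun h => hx (Set.mem_union_left _ ⟨hxB, h⟩)
      have h2 : ¬ (x 2 < 0) := fun h => hx (Set.mem_union_right _ ⟨hxB, h⟩)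
      show x 2 = 0
      exact le_antisymm (not_lt.1 h1) (not_lt.1 h2)
    · have he : ((Bp ∪ Bm : Set E3)) \ B = ∅ := by
        apply Set.eq_empty_of_subset_empty
        rintro x ⟨hx, hxB⟩
        rcases hx with h | h <;> exact absurd h.1 hxB
      rw [he]
      simp
  -- image identity
  have hinv := Rfun_involutive
  have hinj : Function.Injective Rfun := hinv.injective
  have hximg : Rfun '' Bp = Bm := by
    rw [hBpdef, hBmdef, Set.image_inter hinj, hRB]
    congr 1
    ext y
    constructor
    · rintro ⟨z, hz, rfl⟩
      have : Rfun z 2 = -(z 2) := by simp [Rfun]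
      simp only [Set.mem_setOf_eq] at hz ⊢
      rw [this]; linarith
    · intro hy
      refine ⟨Rfun y, ?_, hinv y⟩
      have : Rfun y 2 = -(y 2) := by simp [Rfun]
      simp only [Set.mem_setOf_eq] at hy ⊢
      rw [this]; linarith
  have hemb : MeasurableEmbedding Rfun := by
    have := Rli.toHomeomorph.measurableEmbedding
    exact this
  have hmp : MeasurePreserving Rfun (volume : Measure E3) volume := Rli.measurePreserving
  -- chain of equalities
  have step1 : ∫ x in B, f x = ∫ x in Bp ∪ Bm, f x := setIntegral_congr_set hae
  have step2 : ∫ x in Bp ∪ Bm, f x = (∫ x in Bp, f x) + ∫ x in Bm, f x :=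
    setIntegral_union hdisj hBm hfint.integrableOn hfint.integrableOn
  have step3 : ∫ x in Bm, f x = ∫ x in Bp, f (Rfun x) := by
    rw [← hximg]
    exact hmp.setIntegral_image_emb hemb f Bp
  have step4 : (∫ x in Bp, f x) + (∫ x in Bp, f (Rfun x))
      = ∫ x in Bp, frobInner (S x) (S x) := by
    have h1 : (∫ x in Bp, f x) + (∫ x in Bp, f (Rfun x))
        = ∫ x in Bp, (f x + f (Rfun x)) :=
      (integral_add hfint.integrableOn hfRint.integrableOn).symm
    rw [h1]
    refine setIntegral_congr_fun hBp fun x _ => ?_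
    show f x + f (Rfun x) = frobInner (S x) (S x)
    have hSR : S (Rfun x) = A (Rfun x) + Rmat * A x * Rmat := by
      show A (Rfun x) + Rmat * A (Rfun (Rfun x)) * Rmat = _
      rw [hinv x]
    show frobInner (A x) (S x) + frobInner (A (Rfun x)) (S (Rfun x)) = frobInner (S x) (S x)
    rw [hSR]
    exact frob_key (A x) (A (Rfun x))
  have main : ∫ x in B, f x = ∫ x in Bp, frobInner (S x) (S x) := by
    rw [step1, step2, step3, step4]
  constructor
  · rw [hfeq, main]
  · rw [hfeq, main]
    refine setIntegral_nonneg hBp fun x _ => frob_nonneg (S x)
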